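/- Specializing the Left-End Chain Rule: under the hypotheses of the Left-End Chain Rule, if x ∉ {a, b}, then ⟦∂((B::K₂)[y])/∂x⟧_{ρ⟨K₁⟩} = ⟦∂(K₂[y])/∂x⟧_{ρ⟨K₁;B⟩}; i.e., the partial derivative with respect to a variable not occurring as an operand of the processed binding is unchanged. -/

import Mathlib

inductive Exp (I : Type) : Type
  | zero : Exp I
  | one  : Exp I
  | leaf : I → Exp I
  | add  : Exp I → Exp I → Exp I
  | mul  : Exp I → Exp I → Exp I

def Exp.eval {I R : Type} [CommSemiring R] (ρ : I → R) : Exp I → R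
  | .zero => 0
  | .one => 1
  | .leaf i => ρ i
  | .add e₁ e₂ => e₁.eval ρ + e₂.eval ρ
  | .mul e₁ e₂ => e₁.eval ρ * e₂.eval ρ

inductive Op : Type
  | add
  | mul

def Op.node {V : Type} : Op → Exp V → Exp V → Exp V
  | .add, e₁, e₂ => .add e₁ e₂
  | .mul, e₁, e₂ => .mul e₁ e₂

/-- A binding `u := a op b`. -/
structure Binding (V : Type) where
  u : V
  op : Op
  a : V
  b : V

/-- A context is a list of bindings; the left end is the earliest binding. -/
abbrev Ctx (V : Type) := List (Binding V)

def Ctx.defs {V : Type} (K : Ctx V) : List V := List.map Binding.u K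

/-- Filling, processing bindings from the newest (head of the reversed list). -/
def fillAux {V : Type} [DecidableEq V] : List (Binding V) → V → Exp V
  | [], y => .leaf y
  | B :: K, y =>
      if B.u = y then B.op.node (fillAux K B.a) (fillAux K B.b) else fillAux K y

/-- Filling a context with an identifier, processing bindings from the right end. -/
def Ctx.fill {V : Type} [DecidableEq V] (K : Ctx V) (y : V) : Exp V :=
  fillAux (List.reverse K) y

/-- Extension of an environment by a context: `ρ⟨K⟩(y) = ⟦K[y]⟧_ρ`. -/
def extendEnv {V R : Type} [DecidableEq V] [CommSemiring R] (ρ : V → R) (K : Ctx V) : V → R :=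
  fun y => Exp.eval ρ (Ctx.fill K y)

def Exp.deriv {I : Type} [DecidableEq I] (j : I) : Exp I → Exp I
  | .leaf i => if i = j then .one else .zero
  | .zero => .zero
  | .one => .zero
  | .add e₁ e₂ => .add (e₁.deriv j) (e₂.deriv j)
  | .mul e₁ e₂ => .add (.mul (e₁.deriv j) e₂) (.mul e₁ (e₂.deriv j))


def Exp.subst {V : Type} (σ : V → Exp V) : Exp V → Exp V
  | .zero => .zero
  | .one => .one
  | .leaf i => σ i
  | .add e₁ e₂ => .add (e₁.subst σ) (e₂.subst σ)
  | .mul e₁ e₂ => .mul (e₁.subst σ) (e₂.subst σ)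

lemma subst_node {V : Type} (σ : V → Exp V) (op : Op) (e₁ e₂ : Exp V) :
    Exp.subst σ (op.node e₁ e₂) = op.node (e₁.subst σ) (e₂.subst σ) := by
  cases op <;> rfl

lemma fillAux_append {V : Type} [DecidableEq V] (L M : List (Binding V)) (y : V) :
    fillAux (L ++ M) y = Exp.subst (fun z => fillAux M z) (fillAux L y) := by
  induction L generalizing y with
  | nil => rfl
  | cons B L ih =>
      simp only [List.cons_append, fillAux]
      by_cases h : B.u = y <;> simp [h, ih, subst_node]

lemma eval_subst {V R : Type} [CommSemiring R] (ρ : V → R) (σ : V → Exp V) (e : Exp V) :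
    Exp.eval ρ (e.subst σ) = Exp.eval (fun z => Exp.eval ρ (σ z)) e := by
  induction e <;> simp [Exp.subst, Exp.eval, *]

lemma eval_deriv_subst {V R : Type} [DecidableEq V] [CommSemiring R]
    (ρ : V → R) (σ : V → Exp V) (x : V)
    (H : ∀ z, Exp.eval ρ (Exp.deriv x (σ z)) = if z = x then 1 else 0)
    (e : Exp V) :
    Exp.eval ρ (Exp.deriv x (e.subst σ))
      = Exp.eval (fun z => Exp.eval ρ (σ z)) (Exp.deriv x e) := by
  induction e with
  | zero => rfl
  | one => rfl
  | leaf i =>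
      simp only [Exp.subst, Exp.deriv, H i]
      split <;> simp [Exp.eval]
  | add e₁ e₂ ih₁ ih₂ => simp [Exp.subst, Exp.deriv, Exp.eval, ih₁, ih₂]
  | mul e₁ e₂ ih₁ ih₂ => simp [Exp.subst, Exp.deriv, Exp.eval, ih₁, ih₂, eval_subst]

/-- Left-End Chain Rule specialized to a variable `x ∉ {a, b}`. -/
theorem left_end_chain_rule_untouched {V R : Type} [DecidableEq V] [CommSemiring R]
    (a b u x y : V) (op : Op) (K₁ K₂ : Ctx V) (ρ : V → R)
    (hxu : x ≠ u) (hxa : x ≠ a) (hxb : x ≠ b)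
    (hu₁ : u ∉ Ctx.defs K₁) (hu₂ : u ∉ Ctx.defs K₂) :
    Exp.eval (extendEnv ρ K₁)
        (Exp.deriv x (Ctx.fill ((⟨u, op, a, b⟩ :: K₂ : List (Binding V)) : Ctx V) y))
      = Exp.eval (extendEnv ρ ((K₁ ++ [⟨u, op, a, b⟩] : List (Binding V)) : Ctx V))
          (Exp.deriv x (Ctx.fill K₂ y)) := by
  classical
  set B : Binding V := ⟨u, op, a, b⟩
  set σ : V → Exp V := fun z => fillAux [B] z with hσ
  have hfill : Ctx.fill (B :: K₂) y = Exp.subst σ (Ctx.fill K₂ y) := by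
    simp only [Ctx.fill, List.reverse_cons, fillAux_append, σ]
  have henv : (fun z => Exp.eval (extendEnv ρ K₁) (σ z)) = extendEnv ρ (K₁ ++ [B]) := by
    funext z
    simp only [hσ, extendEnv, Ctx.fill, List.reverse_append, List.reverse_cons,
      List.reverse_nil, List.nil_append, List.cons_append, fillAux]
    by_cases h : u = z <;> simp only [B, h, if_pos, if_neg, ite_true, ite_false] <;>
      cases op <;> simp [B, Op.node, Exp.eval, fillAux, h, extendEnv, Ctx.fill]
  have H : ∀ z, Exp.eval (extendEnv ρ K₁) (Exp.deriv x (σ z)) = if z = x then 1 else 0 := by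
    intro z
    simp only [hσ, fillAux]
    by_cases h : u = z
    · subst h
      cases op <;>
        simp [B, Op.node, Exp.deriv, Exp.eval, fillAux, Ne.symm hxa, Ne.symm hxb, Ne.symm hxu]
    · simp only [B, if_neg h, fillAux, Exp.deriv]
      split <;> simp [Exp.eval]
  rw [hfill, eval_deriv_subst _ _ _ H, henv]
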